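/- Let M be a finite 2-semilattice whose digraph is strongly connected. Then M has no proper absorbing subuniverse: if B ⊆ M is nonempty, closed under ·, and absorbing (witnessed by some term of the free magma on n ≥ 2 generators), then B = M. -/
import Mathlib

inductive Sym9 | X | Bv | XB
deriving DecidableEq

instance : Mul Sym9 := ⟨fun a b => match a, b with
  | .X, .X => .X
  | .Bv, .Bv => .Bv
  | _, _ => .XB⟩

def Sym9.interp {M : Type*} [Mul M] (x b : M) : Sym9 → M
  | .X => x
  | .Bv => b
  | .XB => x * b

lemma sym9_key {M : Type*} [Mul M]
    (hidem : ∀ x : M, x * x = x)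
    (hcomm : ∀ x y : M, x * y = y * x)
    (habs : ∀ x y : M, x * (x * y) = x * y)
    {n : ℕ} (i0 : Fin n) (x b : M) (t : FreeMagma (Fin n)) :
    FreeMagma.lift (fun j => if j = i0 then x else b) t =
      Sym9.interp x b
        (FreeMagma.lift (fun j => if j = i0 then Sym9.X else Sym9.Bv) t) := by
  induction t with
  | ih1 j =>
      simp only [FreeMagma.lift_of]
      split <;> rfl
  | ih2 t1 t2 ih1 ih2 =>
      rw [map_mul, map_mul, ih1, ih2]
      rcases h1 : FreeMagma.lift (fun j => if j = i0 then Sym9.X else Sym9.Bv) t1 with _|_|_ <;>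
      rcases h2 : FreeMagma.lift (fun j => if j = i0 then Sym9.X else Sym9.Bv) t2 with _|_|_ <;>
      simp only [Sym9.interp] <;>
      first
        | rfl
        | exact hidem _
        | exact habs x b
        | exact hcomm b x
        | (rw [hcomm x b, habs])
        | (rw [hcomm _ x, habs])
        | (rw [hcomm _ b, hcomm x b, habs])

lemma sym9_exists {n : ℕ} (t : FreeMagma (Fin n)) :
    ∃ i : Fin n,
      FreeMagma.lift (fun j => if j = i then Sym9.X else Sym9.Bv) t ≠ Sym9.Bv := by
  induction t with
  | ih1 j =>
      exact ⟨j, by simp [FreeMagma.lift_of]⟩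
  | ih2 t1 t2 ih1 ih2 =>
      obtain ⟨i, hi⟩ := ih1
      refine ⟨i, ?_⟩
      rw [map_mul]
      rcases h1 : FreeMagma.lift (fun j => if j = i then Sym9.X else Sym9.Bv) t1 with _|_|_ <;>
      rcases h2 : FreeMagma.lift (fun j => if j = i then Sym9.X else Sym9.Bv) t2 with _|_|_ <;>
        simp_all <;> exact (hi rfl).elim

theorem stmt9 {M : Type*} [Mul M] [Finite M]
    (hidem : ∀ x : M, x * x = x)
    (hcomm : ∀ x y : M, x * y = y * x)
    (habs : ∀ x y : M, x * (x * y) = x * y)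
    (hsc : ∀ a b : M, Relation.ReflTransGen (fun x y => x * y = y) a b)
    (B : Set M) (hBne : B.Nonempty)
    (hBclosed : ∀ a ∈ B, ∀ b ∈ B, a * b ∈ B)
    (habsorb : ∃ n : ℕ, 2 ≤ n ∧ ∃ t : FreeMagma (Fin n),
      ∀ v : Fin n → M, (∃ i : Fin n, ∀ j : Fin n, j ≠ i → v j ∈ B) →
        FreeMagma.lift v t ∈ B) :
    B = Set.univ := by
  obtain ⟨n, hn, t, ht⟩ := habsorb
  obtain ⟨b0, hb0⟩ := hBne
  obtain ⟨i0, hi0⟩ := sym9_exists t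
  -- For any x and b ∈ B, eval at (x at i0, b elsewhere) lies in B
  have hev : ∀ (x : M), ∀ b ∈ B,
      Sym9.interp x b (FreeMagma.lift (fun j => if j = i0 then Sym9.X else Sym9.Bv) t) ∈ B := by
    intro x b hb
    rw [← sym9_key hidem hcomm habs]
    apply ht
    exact ⟨i0, fun j hj => by simp [hj]; exact hb⟩
  rcases hs : FreeMagma.lift (fun j => if j = i0 then Sym9.X else Sym9.Bv) t with _|_|_
  · -- interp = x : everything in B
    ext a
    simp only [Set.mem_univ, iff_true]
    have := hev a b0 hb0
    rwa [hs] at this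
  · exact absurd hs hi0
  · -- interp = x * b : B absorbs, then use strong connectivity
    have hprod : ∀ (x : M), ∀ b ∈ B, x * b ∈ B := by
      intro x b hb
      have := hev x b hb
      rwa [hs] at this
    ext a
    simp only [Set.mem_univ, iff_true]
    have hpath := hsc b0 a
    induction hpath with
    | refl => exact hb0
    | tail hcd hstep ih =>
        rename_i c d
        have : d * c ∈ B := hprod d c ih
        rwa [hcomm d c, hstep] at this
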